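/- Let G be a graph, k ≥ 1, F(G) the union of all tree components of G, and cmp(F(G)) the number of tree components. Then M_k(G) has at least one circuit if and only if k ≤ Δ(G) + cmp(F(G)). -/

import Mathlib

open scoped Classical

/-- A finite multigraph: loops and parallel edges allowed. -/
structure Multigraph where
  V : Type
  E : Type
  [fintypeV : Fintype V]
  [fintypeE : Fintype E]
  ends : E → Sym2 V

attribute [instance] Multigraph.fintypeV Multigraph.fintypeE

namespace Multigraph

variable (G : Multigraph)

/-- Vertex support of an edge set: vertices incident to some edge of `X`. -/
noncomputable def supp (X : Finset G.E) : Finset G.V :=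
  Finset.univ.filter (fun v => ∃ e ∈ X, v ∈ G.ends e)

/-- `Δ` of the subgraph induced by the edge set `X`. -/
noncomputable def delta (X : Finset G.E) : ℤ := (X.card : ℤ) - (G.supp X).card

/-- `Δ(G) = |E(G)| - |V(G)|`. -/
noncomputable def deltaG : ℤ := (Fintype.card G.E : ℤ) - (Fintype.card G.V : ℤ)

/-- Degree of `v` in the edge set `X`: loops count twice. -/
noncomputable def degIn (X : Finset G.E) (v : G.V) : ℕ :=
  ∑ e ∈ X, (if G.ends e = Sym2.mk v v then 2 else if v ∈ G.ends e then 1 else 0)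

/-- `u` and `v` are joined by an edge of `X`. -/
def adjIn (X : Finset G.E) (u v : G.V) : Prop := ∃ e ∈ X, G.ends e = Sym2.mk u v

/-- Reachability using only edges of `X`. -/
def reachIn (X : Finset G.E) : G.V → G.V → Prop :=
  Relation.ReflTransGen (G.adjIn X)

/-- The edge set `X` induces a connected subgraph. -/
def ConnSet (X : Finset G.E) : Prop :=
  X.Nonempty ∧ ∀ u ∈ G.supp X, ∀ v ∈ G.supp X, G.reachIn X u v

/-- Edges of the component of the subgraph `(V, X)` containing vertex `v`. -/
noncomputable def compEdges (X : Finset G.E) (v : G.V) : Finset G.E :=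
  X.filter (fun f => ∃ u ∈ G.ends f, G.reachIn X v u)

/-- Vertices of the component of `v` in the graph `(V, X)` (all vertices kept). -/
noncomputable def compVerts (X : Finset G.E) (v : G.V) : Finset G.V :=
  Finset.univ.filter (fun u => G.reachIn X v u)

/-- `C` is (the edge set of) a cycle: connected, every vertex of degree 2. -/
def IsCycleSet (C : Finset G.E) : Prop :=
  G.ConnSet C ∧ ∀ v ∈ G.supp C, G.degIn C v = 2

/-- `T` induces a tree. -/
def IsTreeSet (T : Finset G.E) : Prop := G.ConnSet T ∧ G.delta T = -1

/-- The component of `v` in `(V, X)` is a tree (possibly a single vertex). -/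
def IsTreeCompAt (X : Finset G.E) (v : G.V) : Prop :=
  (G.compEdges X v).card + 1 = (G.compVerts X v).card

/-- The number of tree components of the graph `(V, X)`. -/
noncomputable def treeCount (X : Finset G.E) : ℕ :=
  (((Finset.univ : Finset G.V).filter (fun v => G.IsTreeCompAt X v)).image
    (fun v => G.compVerts X v)).card

/-- The graph `G` has no isolated vertices. -/
def NoIso : Prop := ∀ v : G.V, ∃ e : G.E, v ∈ G.ends e

/-- The graph `G` has no leaves. -/
def NoLeaf : Prop := ∀ v : G.V, G.degIn Finset.univ v ≠ 1

/-- The graph `G` is connected. -/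
def GConn : Prop := Nonempty G.V ∧ ∀ u v : G.V, G.reachIn Finset.univ u v

/-- `G` is a bicycle: connected, leafless, with `Δ(G) = 1`. -/
def IsBicycle : Prop := G.GConn ∧ G.NoLeaf ∧ G.deltaG = 1

/-- One round of deleting all edges incident to a leaf. -/
noncomputable def pruneStep (X : Finset G.E) : Finset G.E :=
  X.filter (fun e => ∀ v ∈ G.ends e, G.degIn X v ≠ 1)

/-- Edge set obtained from `G` by repeatedly deleting leaves until none remain. -/
noncomputable def kernelSet : Finset G.E :=
  G.pruneStep^[Fintype.card G.E] Finset.univ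

/-- `Δ` of the component of `G` containing `v`. -/
noncomputable def compDelta (v : G.V) : ℤ :=
  ((G.compEdges Finset.univ v).card : ℤ) - ((G.compVerts Finset.univ v).card : ℤ)

/-- The core `[G]`: union of the kernels of the components `A` with `Δ(A) ≥ 1`. -/
noncomputable def coreSet : Finset G.E :=
  G.kernelSet.filter (fun e => ∀ v ∈ G.ends e, 1 ≤ G.compDelta v)

/-- `P` is the edge set of an `(x,y)`-path. -/
def IsPathSet (P : Finset G.E) (x y : G.V) : Prop :=
  G.ConnSet P ∧ x ≠ y ∧ x ∈ G.supp P ∧ y ∈ G.supp P ∧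
  G.degIn P x = 1 ∧ G.degIn P y = 1 ∧
  ∀ v ∈ G.supp P, v ≠ x → v ≠ y → G.degIn P v = 2

/-- `C` induces a bicycle subgraph: connected, leafless, `Δ = 1`. -/
def IsBicycleSet (C : Finset G.E) : Prop :=
  G.ConnSet C ∧ (∀ v ∈ G.supp C, G.degIn C v ≠ 1) ∧ G.delta C = 1

/-- Circuits of the `k`-circular matroid `M_k(G)`: minimal nonempty edge sets `C`
with `|C| = |V(G⟨C⟩)| + k`, i.e. `Δ(G⟨C⟩) = k`. -/
def IsCircuitSet (k : ℕ) (C : Finset G.E) : Prop :=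
  (C.Nonempty ∧ G.delta C = (k : ℤ)) ∧
  ∀ D ⊂ C, ¬ (D.Nonempty ∧ G.delta D = (k : ℤ))

/-- Independent sets of `M_k(G)`. -/
def Indep (k : ℕ) (I : Finset G.E) : Prop := ∀ C ⊆ I, ¬ G.IsCircuitSet k C

/-- Bases of `M_k(G)`: maximal independent sets. -/
def IsBase (k : ℕ) (B : Finset G.E) : Prop :=
  G.Indep k B ∧ ∀ B' : Finset G.E, G.Indep k B' → B ⊆ B' → B' = B

/-- The matroid `M_k(G)` is connected: at least two elements and every two
elements lie on a common circuit. -/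
def MConn (k : ℕ) : Prop :=
  2 ≤ Fintype.card G.E ∧
  ∀ a b : G.E, ∃ C : Finset G.E, G.IsCircuitSet k C ∧ a ∈ C ∧ b ∈ C

end Multigraph

namespace Multigraph

variable {G : Multigraph}

lemma mem_supp' {X : Finset G.E} {v : G.V} :
    v ∈ G.supp X ↔ ∃ e ∈ X, v ∈ G.ends e := by
  simp only [supp, Finset.mem_filter, Finset.mem_univ, true_and]

lemma exists_ends (e : G.E) : ∃ a b, G.ends e = Sym2.mk a b :=
  (Sym2.exists (f := fun z => G.ends e = z)).mp ⟨G.ends e, rfl⟩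

lemma adjIn_symm {X : Finset G.E} : Symmetric (G.adjIn X) := by
  rintro u v ⟨e, he, hends⟩
  exact ⟨e, he, by rw [hends]; exact Sym2.eq_swap⟩

lemma reach_symm {X : Finset G.E} : Symmetric (G.reachIn X) :=
  fun x y h => @Std.Symm.symm _ _ (@Relation.ReflTransGen.stdSymm _ _ ⟨fun a b h => adjIn_symm h⟩) x y h

lemma reach_mono {X Y : Finset G.E} (h : X ⊆ Y) {u v : G.V} (hr : G.reachIn X u v) :
    G.reachIn Y u v :=
  Relation.ReflTransGen.mono (r := G.adjIn X) (p := G.adjIn Y)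
    (by intro a b ⟨e, he, hh⟩; exact ⟨e, h he, hh⟩) u v hr

lemma mem_compVerts' {X : Finset G.E} {v u : G.V} :
    u ∈ G.compVerts X v ↔ G.reachIn X v u := by
  simp only [compVerts, Finset.mem_filter, Finset.mem_univ, true_and]

lemma self_mem_compVerts {X : Finset G.E} {v : G.V} : v ∈ G.compVerts X v :=
  mem_compVerts'.mpr .refl

lemma compVerts_eq {X : Finset G.E} {v u : G.V} (h : G.reachIn X v u) :
    G.compVerts X v = G.compVerts X u := by
  ext w
  simp only [mem_compVerts']
  exact ⟨fun hw => (reach_symm h).trans hw, fun hw => h.trans hw⟩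

lemma supp_mono {X Y : Finset G.E} (h : X ⊆ Y) : G.supp X ⊆ G.supp Y := by
  intro v hv
  obtain ⟨e, he, hve⟩ := mem_supp'.mp hv
  exact mem_supp'.mpr ⟨e, h he, hve⟩

lemma mem_supp_of_reach {X : Finset G.E} {v u : G.V} (hv : v ∈ G.supp X)
    (h : G.reachIn X v u) : u ∈ G.supp X := by
  rcases h.cases_tail with h | ⟨c, _, e, he, hends⟩
  · rwa [h]
  · exact mem_supp'.mpr ⟨e, he, by rw [hends]; exact Sym2.mem_mk_right _ _⟩

lemma reach_of_mem_ends {X : Finset G.E} {e : G.E} (he : e ∈ X) {u w : G.V}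
    (hu : u ∈ G.ends e) (hw : w ∈ G.ends e) : G.reachIn X u w := by
  obtain ⟨a, b, hab⟩ := exists_ends (G := G) e
  rw [hab, Sym2.mem_iff] at hu hw
  have hadj : G.reachIn X a b := Relation.ReflTransGen.single ⟨e, he, hab⟩
  rcases hu with rfl | rfl <;> rcases hw with rfl | rfl
  · exact .refl
  · exact hadj
  · exact reach_symm hadj
  · exact .refl

noncomputable def comps (G : Multigraph) (X : Finset G.E) : Finset (Finset G.V) :=
  (G.supp X).image (G.compVerts X)

noncomputable def cyc (G : Multigraph) (X : Finset G.E) : ℤ :=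
  (X.card : ℤ) + (G.comps X).card - (G.supp X).card

lemma mem_supp_of_mem_comps {X : Finset G.E} {S : Finset G.V} (hS : S ∈ G.comps X)
    {u : G.V} (hu : u ∈ S) : u ∈ G.supp X := by
  obtain ⟨v, hv, rfl⟩ := Finset.mem_image.mp hS
  exact mem_supp_of_reach hv (mem_compVerts'.mp hu)

lemma comps_eq_of_mem {X : Finset G.E} {S : Finset G.V} (hS : S ∈ G.comps X)
    {u : G.V} (hu : u ∈ S) : S = G.compVerts X u := by
  obtain ⟨v, hv, rfl⟩ := Finset.mem_image.mp hS
  exact compVerts_eq (mem_compVerts'.mp hu)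

lemma comps_disj {X : Finset G.E} {S T : Finset G.V} (hS : S ∈ G.comps X)
    (hT : T ∈ G.comps X) {u : G.V} (hu : u ∈ S) (hu' : u ∈ T) : S = T := by
  rw [comps_eq_of_mem hS hu, comps_eq_of_mem hT hu']

lemma supp_empty : G.supp (∅ : Finset G.E) = ∅ := by
  ext v; simp [mem_supp']

lemma comps_empty : G.comps (∅ : Finset G.E) = ∅ := by
  simp [comps, supp_empty]

lemma cyc_empty : G.cyc (∅ : Finset G.E) = 0 := by
  simp [cyc, supp_empty, comps_empty]

lemma reach_erase {X : Finset G.E} {e : G.E} {a b v u : G.V}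
    (hab : G.ends e = Sym2.mk a b)
    (ha : ¬ G.reachIn (X.erase e) v a) (hb : ¬ G.reachIn (X.erase e) v b)
    (h : G.reachIn X v u) : G.reachIn (X.erase e) v u := by
  induction h with
  | refl => exact .refl
  | tail hwc hstep ih =>
    obtain ⟨f, hf, hends⟩ := hstep
    by_cases hfe : f = e
    · subst hfe
      rw [hab] at hends
      rcases Sym2.eq_iff.mp hends.symm with ⟨rfl, rfl⟩ | ⟨rfl, rfl⟩
      · exact absurd ih ha
      · exact absurd ih hb
    · exact ih.tail ⟨f, Finset.mem_erase.mpr ⟨hfe, hf⟩, hends⟩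

lemma ncomp_erase {X : Finset G.E} {e : G.E} (he : e ∈ X) :
    ((G.comps (X.erase e)).card : ℤ) + (G.supp X).card
      ≤ (G.comps X).card + 1 + (G.supp (X.erase e)).card := by
  obtain ⟨a, b, hab⟩ := exists_ends (G := G) e
  set X' := X.erase e with hX'
  have hsub : X' ⊆ X := Finset.erase_subset _ _
  -- supp X ⊆ supp X' ∪ ({a,b} \ supp X')
  have hsupp : G.supp X ⊆ G.supp X' ∪ (({a, b} : Finset G.V) \ G.supp X') := by
    intro v hv
    by_cases hv' : v ∈ G.supp X'
    · exact Finset.mem_union_left _ hv'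
    · obtain ⟨f, hf, hvf⟩ := mem_supp'.mp hv
      have hfe : f = e := by
        by_contra hne
        exact hv' (mem_supp'.mpr ⟨f, Finset.mem_erase.mpr ⟨hne, hf⟩, hvf⟩)
      subst hfe
      rw [hab, Sym2.mem_iff] at hvf
      refine Finset.mem_union_right _ (Finset.mem_sdiff.mpr ⟨?_, hv'⟩)
      rcases hvf with rfl | rfl <;> simp
  have hsuppcard : (G.supp X).card ≤ (G.supp X').card + (({a, b} : Finset G.V) \ G.supp X').card :=
    le_trans (Finset.card_le_card hsupp) (Finset.card_union_le _ _)
  -- split components of X'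
  set Q := (G.comps X').filter (fun S => a ∈ S ∨ b ∈ S) with hQ
  set P := (G.comps X').filter (fun S => ¬ (a ∈ S ∨ b ∈ S)) with hP
  have hsplit : Q.card + P.card = (G.comps X').card :=
    Finset.card_filter_add_card_filter_not _
  -- Q bound
  have hQcard : Q.card ≤ (({a, b} : Finset G.V) ∩ G.supp X').card := by
    apply Finset.card_le_card_of_injOn (fun S => if a ∈ S then a else b)
    · intro S hSQ
      obtain ⟨hS, hor⟩ := Finset.mem_filter.mp hSQ
      by_cases haS : a ∈ S
      · simp only [haS, if_true]
        exact Finset.mem_inter.mpr ⟨by simp, mem_supp_of_mem_comps hS haS⟩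
      · have hbS : b ∈ S := hor.resolve_left haS
        simp only [haS, if_false]
        exact Finset.mem_inter.mpr ⟨by simp, mem_supp_of_mem_comps hS hbS⟩
    · intro S₁ h₁ S₂ h₂ hf
      simp only [Finset.mem_coe, hQ, Finset.mem_filter] at h₁ h₂
      by_cases ha₁ : a ∈ S₁ <;> by_cases ha₂ : a ∈ S₂
      · exact comps_disj h₁.1 h₂.1 ha₁ ha₂
      · simp only at hf
        rw [if_pos ha₁, if_neg ha₂] at hf
        have hbS : b ∈ S₂ := h₂.2.resolve_left ha₂
        rw [← hf] at hbS
        exact absurd hbS ha₂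
      · simp only at hf
        rw [if_neg ha₁, if_pos ha₂] at hf
        have hbS : b ∈ S₁ := h₁.2.resolve_left ha₁
        rw [hf] at hbS
        exact absurd hbS ha₁
      · exact comps_disj h₁.1 h₂.1 (h₁.2.resolve_left ha₁) (h₂.2.resolve_left ha₂)
  -- P bound
  have haX : a ∈ G.supp X := mem_supp'.mpr ⟨e, he, by rw [hab]; exact Sym2.mem_mk_left _ _⟩
  have hcompsa : G.compVerts X a ∈ G.comps X := Finset.mem_image_of_mem _ haX
  have hPcard : P.card ≤ ((G.comps X).erase (G.compVerts X a)).card := by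
    apply Finset.card_le_card_of_injOn
      (fun S => Finset.univ.filter (fun w => ∃ v ∈ S, G.reachIn X v w))
    · intro S hSP
      obtain ⟨hS, hnor⟩ := Finset.mem_filter.mp hSP
      obtain ⟨v, hv, rfl⟩ := Finset.mem_image.mp hS
      push_neg at hnor
      have hnra : ¬ G.reachIn X' v a := fun h => hnor.1 (mem_compVerts'.mpr h)
      have hnrb : ¬ G.reachIn X' v b := fun h => hnor.2 (mem_compVerts'.mpr h)
      have hfs : (Finset.univ.filter (fun w => ∃ u ∈ G.compVerts X' v, G.reachIn X u w))
          = G.compVerts X v := by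
        ext w
        simp only [Finset.mem_filter, Finset.mem_univ, true_and, mem_compVerts']
        constructor
        · rintro ⟨u, hu, huw⟩
          exact (reach_mono hsub hu).trans huw
        · intro hw
          exact ⟨v, Relation.ReflTransGen.refl, hw⟩
      simp only [Finset.mem_coe]
      rw [hfs]
      refine Finset.mem_erase.mpr ⟨?_, Finset.mem_image_of_mem _ (supp_mono hsub hv)⟩
      intro hEq
      have hra : G.reachIn X v a := by
        have : a ∈ G.compVerts X v := hEq ▸ self_mem_compVerts
        exact mem_compVerts'.mp this
      exact hnra (reach_erase hab hnra hnrb hra)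
    · intro S₁ h₁ S₂ h₂ hf
      simp only [Finset.mem_coe, hP, Finset.mem_filter] at h₁ h₂
      obtain ⟨hS₁, hnor₁⟩ := h₁
      obtain ⟨hS₂, hnor₂⟩ := h₂
      obtain ⟨v₁, hv₁, rfl⟩ := Finset.mem_image.mp hS₁
      obtain ⟨v₂, hv₂, rfl⟩ := Finset.mem_image.mp hS₂
      push_neg at hnor₁
      have hnra : ¬ G.reachIn X' v₁ a := fun h => hnor₁.1 (mem_compVerts'.mpr h)
      have hnrb : ¬ G.reachIn X' v₁ b := fun h => hnor₁.2 (mem_compVerts'.mpr h)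
      have h12 : G.reachIn X v₁ v₂ := by
        have hv2mem : v₂ ∈ Finset.univ.filter (fun w => ∃ v ∈ G.compVerts X' v₂, G.reachIn X v w) :=
          Finset.mem_filter.mpr ⟨Finset.mem_univ _, ⟨v₂, self_mem_compVerts, .refl⟩⟩
        simp only at hf
        rw [← hf] at hv2mem
        obtain ⟨u, hu, huv⟩ := (Finset.mem_filter.mp hv2mem).2
        exact (reach_mono hsub (mem_compVerts'.mp hu)).trans huv
      exact compVerts_eq (reach_erase hab hnra hnrb h12)
  have hPcard' : P.card + 1 ≤ (G.comps X).card := by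
    have := Finset.card_erase_of_mem hcompsa
    have hpos : 1 ≤ (G.comps X).card := Finset.card_pos.mpr ⟨_, hcompsa⟩
    omega
  have hcap : (({a, b} : Finset G.V) ∩ G.supp X').card
      + (({a, b} : Finset G.V) \ G.supp X').card = ({a, b} : Finset G.V).card := by
    rw [Finset.card_inter_add_card_sdiff]
  have hab2 : ({a, b} : Finset G.V).card ≤ 2 := Finset.card_insert_le _ _ |>.trans (by simp)
  have h1 : (G.comps X').card ≤ P.card + Q.card := by omega
  push_cast
  omega
lemma cyc_erase {X : Finset G.E} {e : G.E} (he : e ∈ X) : G.cyc (X.erase e) ≤ G.cyc X := by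
  have h := ncomp_erase he
  have hcard : (X.erase e).card = X.card - 1 := Finset.card_erase_of_mem he
  have hpos : 1 ≤ X.card := Finset.card_pos.mpr ⟨e, he⟩
  unfold cyc
  rw [hcard]
  push_cast [hpos]
  omega

lemma cyc_mono : ∀ (n : ℕ) (X Y : Finset G.E), Y.card = n → X ⊆ Y → G.cyc X ≤ G.cyc Y := by
  intro n
  induction n with
  | zero =>
    intro X Y hY hXY
    rw [Finset.card_eq_zero.mp hY] at hXY ⊢
    rw [Finset.subset_empty.mp hXY]
  | succ n ih =>
    intro X Y hY hXY
    rcases eq_or_ssubset_of_subset hXY with rfl | hss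
    · exact le_refl _
    · obtain ⟨e, heY, heX⟩ := Finset.exists_of_ssubset hss
      have hXe : X ⊆ Y.erase e := fun x hx =>
        Finset.mem_erase.mpr ⟨fun hxe => heX (hxe ▸ hx), hXY hx⟩
      have hcard : (Y.erase e).card = n := by
        rw [Finset.card_erase_of_mem heY, hY]; omega
      exact (ih X (Y.erase e) hcard hXe).trans (cyc_erase heY)

lemma cyc_mono' {X Y : Finset G.E} (h : X ⊆ Y) : G.cyc X ≤ G.cyc Y :=
  cyc_mono Y.card X Y rfl h

lemma cyc_nonneg (X : Finset G.E) : 0 ≤ G.cyc X := by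
  have := cyc_mono' (G := G) (Finset.empty_subset X)
  rwa [cyc_empty] at this


noncomputable def edgesOf (G : Multigraph) (S : Finset G.V) : Finset G.E :=
  Finset.univ.filter (fun f => ∃ u ∈ G.ends f, u ∈ S)

lemma mem_edgesOf {S : Finset G.V} {e : G.E} :
    e ∈ G.edgesOf S ↔ ∃ u ∈ G.ends e, u ∈ S := by
  simp only [edgesOf, Finset.mem_filter, Finset.mem_univ, true_and]

lemma compEdges_eq_edgesOf (v : G.V) :
    G.compEdges Finset.univ v = G.edgesOf (G.compVerts Finset.univ v) := by
  ext f
  simp only [compEdges, Finset.mem_filter, Finset.mem_univ, true_and, mem_edgesOf,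
    mem_compVerts']

lemma ends_mem_of_mem_edgesOf {S : Finset G.V} (hS : S ∈ G.comps Finset.univ)
    {e : G.E} (he : e ∈ G.edgesOf S) {w : G.V} (hw : w ∈ G.ends e) : w ∈ S := by
  obtain ⟨u, hu, huS⟩ := mem_edgesOf.mp he
  have hSe : S = G.compVerts Finset.univ u := comps_eq_of_mem hS huS
  rw [hSe]
  exact mem_compVerts'.mpr (reach_of_mem_ends (Finset.mem_univ e) hu hw)

lemma supp_univ (hni : G.NoIso) : G.supp Finset.univ = Finset.univ := by
  ext v
  simp only [Finset.mem_univ, iff_true]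
  obtain ⟨e, he⟩ := hni v
  exact mem_supp'.mpr ⟨e, Finset.mem_univ e, he⟩

lemma compVerts_mem_comps (hni : G.NoIso) (v : G.V) :
    G.compVerts Finset.univ v ∈ G.comps Finset.univ :=
  Finset.mem_image_of_mem _ (by rw [supp_univ hni]; exact Finset.mem_univ v)

lemma supp_edgesOf (hni : G.NoIso) {S : Finset G.V} (hS : S ∈ G.comps Finset.univ) :
    G.supp (G.edgesOf S) = S := by
  ext v
  constructor
  · intro hv
    obtain ⟨e, he, hve⟩ := mem_supp'.mp hv
    exact ends_mem_of_mem_edgesOf hS he hve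
  · intro hv
    obtain ⟨e, he⟩ := hni v
    exact mem_supp'.mpr ⟨e, mem_edgesOf.mpr ⟨v, he, hv⟩, he⟩

lemma reach_in_comp {v u : G.V} (h : G.reachIn Finset.univ v u) :
    G.reachIn (G.edgesOf (G.compVerts Finset.univ v)) v u := by
  induction h with
  | refl => exact .refl
  | tail hwc hstep ih =>
    obtain ⟨f, _, hends⟩ := hstep
    refine ih.tail ⟨f, mem_edgesOf.mpr ⟨_, by rw [hends]; exact Sym2.mem_mk_left _ _, ?_⟩, hends⟩
    exact mem_compVerts'.mpr hwc

lemma compVerts_edgesOf {S : Finset G.V} (hS : S ∈ G.comps Finset.univ)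
    {v : G.V} (hv : v ∈ S) : G.compVerts (G.edgesOf S) v = S := by
  have hSe : S = G.compVerts Finset.univ v := comps_eq_of_mem hS hv
  ext u
  simp only [mem_compVerts']
  constructor
  · intro h
    rw [hSe]
    exact mem_compVerts'.mpr (reach_mono (Finset.subset_univ _) h)
  · intro hu
    have : G.reachIn Finset.univ v u := by
      rw [hSe] at hu
      exact mem_compVerts'.mp hu
    rw [hSe]
    exact reach_in_comp this

lemma comps_nonempty_mem {S : Finset G.V} (hS : S ∈ G.comps Finset.univ) : S.Nonempty := by
  obtain ⟨v, hv, rfl⟩ := Finset.mem_image.mp hS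
  exact ⟨v, self_mem_compVerts⟩

lemma comps_edgesOf {S : Finset G.V} (hni : G.NoIso) (hS : S ∈ G.comps Finset.univ) :
    G.comps (G.edgesOf S) = {S} := by
  unfold comps
  rw [supp_edgesOf hni hS]
  have : ∀ v ∈ S, G.compVerts (G.edgesOf S) v = S := fun v hv => compVerts_edgesOf hS hv
  rw [Finset.image_congr (fun v hv => this v hv)]
  exact Finset.image_const (comps_nonempty_mem hS) S

lemma cyc_edgesOf (hni : G.NoIso) {S : Finset G.V} (hS : S ∈ G.comps Finset.univ) :
    G.cyc (G.edgesOf S) = ((G.edgesOf S).card : ℤ) + 1 - S.card := by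
  unfold cyc
  rw [supp_edgesOf hni hS, comps_edgesOf hni hS, Finset.card_singleton]
  push_cast
  ring


lemma comps_disjoint {S T : Finset G.V} (hS : S ∈ G.comps Finset.univ)
    (hT : T ∈ G.comps Finset.univ) (hne : S ≠ T) : Disjoint S T :=
  Finset.disjoint_left.mpr (fun _ hu hu' => hne (comps_disj hS hT hu hu'))

lemma univV_eq_biUnion (hni : G.NoIso) :
    (Finset.univ : Finset G.V) = (G.comps Finset.univ).biUnion id := by
  ext v
  simp only [Finset.mem_univ, true_iff, Finset.mem_biUnion, id]
  exact ⟨G.compVerts Finset.univ v, compVerts_mem_comps hni v, self_mem_compVerts⟩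

lemma card_V_eq (hni : G.NoIso) :
    Fintype.card G.V = ∑ S ∈ G.comps Finset.univ, S.card := by
  rw [← Finset.card_univ, univV_eq_biUnion hni]
  exact Finset.card_biUnion (fun S hS T hT hne => comps_disjoint hS hT hne)

lemma edgesOf_disjoint {S T : Finset G.V} (hS : S ∈ G.comps Finset.univ)
    (hT : T ∈ G.comps Finset.univ) (hne : S ≠ T) :
    Disjoint (G.edgesOf S) (G.edgesOf T) := by
  refine Finset.disjoint_left.mpr (fun e he he' => ?_)
  obtain ⟨u, hu, huS⟩ := mem_edgesOf.mp he
  exact hne (comps_disj hS hT huS (ends_mem_of_mem_edgesOf hT he' hu))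

lemma univE_eq_biUnion :
    (Finset.univ : Finset G.E) = (G.comps Finset.univ).biUnion G.edgesOf := by
  ext e
  simp only [Finset.mem_univ, true_iff, Finset.mem_biUnion]
  obtain ⟨a, b, hab⟩ := exists_ends (G := G) e
  have haS : a ∈ G.ends e := by rw [hab]; exact Sym2.mem_mk_left _ _
  have ha : a ∈ G.supp Finset.univ := mem_supp'.mpr ⟨e, Finset.mem_univ e, haS⟩
  exact ⟨G.compVerts Finset.univ a, Finset.mem_image_of_mem _ ha,
    mem_edgesOf.mpr ⟨a, haS, self_mem_compVerts⟩⟩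

lemma card_E_eq :
    Fintype.card G.E = ∑ S ∈ G.comps Finset.univ, (G.edgesOf S).card := by
  rw [← Finset.card_univ]
  conv_lhs => rw [univE_eq_biUnion]
  exact Finset.card_biUnion (fun S hS T hT hne => edgesOf_disjoint hS hT hne)

lemma deltaG_eq (hni : G.NoIso) :
    G.deltaG = ∑ S ∈ G.comps Finset.univ, (((G.edgesOf S).card : ℤ) - S.card) := by
  unfold deltaG
  rw [card_V_eq hni, card_E_eq]
  push_cast
  rw [Finset.sum_sub_distrib]

lemma treeCount_eq (hni : G.NoIso) :
    G.treeCount Finset.univ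
      = ((G.comps Finset.univ).filter (fun S => (G.edgesOf S).card + 1 = S.card)).card := by
  unfold treeCount
  congr 1
  ext S
  simp only [Finset.mem_image, Finset.mem_filter, Finset.mem_univ, true_and]
  constructor
  · rintro ⟨v, hv, rfl⟩
    refine ⟨compVerts_mem_comps hni v, ?_⟩
    rwa [IsTreeCompAt, compEdges_eq_edgesOf] at hv
  · rintro ⟨hS, htp⟩
    obtain ⟨v, hv, rfl⟩ := Finset.mem_image.mp hS
    exact ⟨v, by rwa [IsTreeCompAt, compEdges_eq_edgesOf], rfl⟩


lemma comps_card_pos {X : Finset G.E} (h : X.Nonempty) : 1 ≤ (G.comps X).card := by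
  obtain ⟨e, he⟩ := h
  obtain ⟨a, b, hab⟩ := exists_ends (G := G) e
  have ha : a ∈ G.supp X := mem_supp'.mpr ⟨e, he, by rw [hab]; exact Sym2.mem_mk_left _ _⟩
  exact Finset.card_pos.mpr ⟨_, Finset.mem_image_of_mem _ ha⟩

lemma supp_inter_edgesOf {S : Finset G.V} (hS : S ∈ G.comps Finset.univ) (C : Finset G.E) :
    G.supp (C ∩ G.edgesOf S) = G.supp C ∩ S := by
  ext v
  constructor
  · intro hv
    obtain ⟨e, he, hve⟩ := mem_supp'.mp hv
    have heC := Finset.mem_of_mem_inter_left he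
    have heS := Finset.mem_of_mem_inter_right he
    exact Finset.mem_inter.mpr ⟨mem_supp'.mpr ⟨e, heC, hve⟩, ends_mem_of_mem_edgesOf hS heS hve⟩
  · intro hv
    obtain ⟨hvC, hvS⟩ := Finset.mem_inter.mp hv
    obtain ⟨e, he, hve⟩ := mem_supp'.mp hvC
    exact mem_supp'.mpr ⟨e, Finset.mem_inter.mpr ⟨he, mem_edgesOf.mpr ⟨v, hve, hvS⟩⟩, hve⟩

lemma comp_bound (hni : G.NoIso) {S : Finset G.V} (hS : S ∈ G.comps Finset.univ)
    (C : Finset G.E) :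
    ((C ∩ G.edgesOf S).card : ℤ) - (G.supp (C ∩ G.edgesOf S)).card
      ≤ (((G.edgesOf S).card : ℤ) - S.card)
        + (if (G.edgesOf S).card + 1 = S.card then 1 else 0) := by
  have hcycS := cyc_edgesOf hni hS
  rcases Finset.eq_empty_or_nonempty (C ∩ G.edgesOf S) with hemp | hne
  · rw [hemp, supp_empty]
    simp only [Finset.card_empty]
    by_cases htp : (G.edgesOf S).card + 1 = S.card
    · rw [if_pos htp]
      have htp' : ((G.edgesOf S).card : ℤ) + 1 = S.card := by exact_mod_cast htp
      omega
    · rw [if_neg htp]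
      have h0 := cyc_nonneg (G := G) (G.edgesOf S)
      rw [hcycS] at h0
      have htp' : ((G.edgesOf S).card : ℤ) + 1 ≠ S.card := by exact_mod_cast htp
      omega
  · have hmono := cyc_mono' (G := G)
      (Finset.inter_subset_right : C ∩ G.edgesOf S ⊆ G.edgesOf S)
    rw [hcycS] at hmono
    have hpos := comps_card_pos (G := G) hne
    unfold cyc at hmono
    have hposz : (1 : ℤ) ≤ (G.comps (C ∩ G.edgesOf S)).card := by exact_mod_cast hpos
    have : ((C ∩ G.edgesOf S).card : ℤ) - (G.supp (C ∩ G.edgesOf S)).card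
        ≤ ((G.edgesOf S).card : ℤ) - S.card := by omega
    have hif : (0 : ℤ) ≤ (if (G.edgesOf S).card + 1 = S.card then (1 : ℤ) else 0) := by
      split <;> omega
    omega

lemma card_decomp (C : Finset G.E) :
    C.card = ∑ S ∈ G.comps Finset.univ, (C ∩ G.edgesOf S).card := by
  have hC : C = (G.comps Finset.univ).biUnion (fun S => C ∩ G.edgesOf S) := by
    ext e
    simp only [Finset.mem_biUnion, Finset.mem_inter]
    constructor
    · intro he
      have : e ∈ (G.comps Finset.univ).biUnion G.edgesOf := by
        rw [← univE_eq_biUnion]; exact Finset.mem_univ e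
      obtain ⟨S, hS, heS⟩ := Finset.mem_biUnion.mp this
      exact ⟨S, hS, he, heS⟩
    · rintro ⟨S, _, he, _⟩
      exact he
  conv_lhs => rw [hC]
  exact Finset.card_biUnion (fun S hS T hT hne =>
    Finset.disjoint_of_subset_left Finset.inter_subset_right
      (Finset.disjoint_of_subset_right Finset.inter_subset_right
        (edgesOf_disjoint hS hT hne)))

lemma supp_decomp (hni : G.NoIso) (C : Finset G.E) :
    (G.supp C).card = ∑ S ∈ G.comps Finset.univ, (G.supp (C ∩ G.edgesOf S)).card := by
  have hC : G.supp C = (G.comps Finset.univ).biUnion (fun S => G.supp C ∩ S) := by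
    ext v
    simp only [Finset.mem_biUnion, Finset.mem_inter]
    constructor
    · intro hv
      have : v ∈ (G.comps Finset.univ).biUnion id := by
        rw [← univV_eq_biUnion hni]; exact Finset.mem_univ v
      obtain ⟨S, hS, hvS⟩ := Finset.mem_biUnion.mp this
      exact ⟨S, hS, hv, hvS⟩
    · rintro ⟨S, _, hv, _⟩
      exact hv
  conv_lhs => rw [hC]
  rw [Finset.card_biUnion (fun S hS T hT hne =>
    Finset.disjoint_of_subset_left Finset.inter_subset_right
      (Finset.disjoint_of_subset_right Finset.inter_subset_right
        (comps_disjoint hS hT hne)))]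
  exact Finset.sum_congr rfl (fun S hS => by rw [supp_inter_edgesOf hS])

lemma delta_le (hni : G.NoIso) (C : Finset G.E) :
    G.delta C ≤ G.deltaG + G.treeCount Finset.univ := by
  have h1 : G.delta C = ∑ S ∈ G.comps Finset.univ,
      (((C ∩ G.edgesOf S).card : ℤ) - (G.supp (C ∩ G.edgesOf S)).card) := by
    unfold delta
    rw [card_decomp C, supp_decomp hni C]
    push_cast
    rw [Finset.sum_sub_distrib]
  have h2 : G.delta C ≤ ∑ S ∈ G.comps Finset.univ,
      ((((G.edgesOf S).card : ℤ) - S.card)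
        + (if (G.edgesOf S).card + 1 = S.card then (1 : ℤ) else 0)) := by
    rw [h1]
    exact Finset.sum_le_sum (fun S hS => comp_bound hni hS C)
  rw [Finset.sum_add_distrib, Finset.sum_boole] at h2
  rwa [deltaG_eq hni, treeCount_eq hni]


lemma delta_empty : G.delta ∅ = 0 := by
  simp [delta, supp_empty]

lemma delta_singleton_le (e : G.E) : G.delta {e} ≤ 0 := by
  obtain ⟨a, b, hab⟩ := exists_ends (G := G) e
  have ha : a ∈ G.supp {e} := mem_supp'.mpr ⟨e, Finset.mem_singleton_self e,
    by rw [hab]; exact Sym2.mem_mk_left _ _⟩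
  have h1 : 1 ≤ (G.supp {e}).card := Finset.card_pos.mpr ⟨a, ha⟩
  unfold delta
  simp only [Finset.card_singleton]
  omega

lemma delta_C0 (hni : G.NoIso) :
    G.delta (((G.comps Finset.univ).filter
      (fun S => ¬ ((G.edgesOf S).card + 1 = S.card))).biUnion G.edgesOf)
      = G.deltaG + G.treeCount Finset.univ := by
  set F := (G.comps Finset.univ).filter
    (fun S => ¬ ((G.edgesOf S).card + 1 = S.card)) with hF
  have hFsub : F ⊆ G.comps Finset.univ := Finset.filter_subset _ _
  set C₀ := F.biUnion G.edgesOf with hC0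
  have hcard : C₀.card = ∑ S ∈ F, (G.edgesOf S).card :=
    Finset.card_biUnion (fun S hS T hT hne => edgesOf_disjoint (hFsub hS) (hFsub hT) hne)
  have hsupp : G.supp C₀ = F.biUnion id := by
    ext v
    simp only [Finset.mem_biUnion, id]
    constructor
    · intro hv
      obtain ⟨e, he, hve⟩ := mem_supp'.mp hv
      obtain ⟨S, hSF, heS⟩ := Finset.mem_biUnion.mp he
      exact ⟨S, hSF, ends_mem_of_mem_edgesOf (hFsub hSF) heS hve⟩
    · rintro ⟨S, hSF, hvS⟩
      obtain ⟨e, he⟩ := hni v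
      exact mem_supp'.mpr ⟨e, Finset.mem_biUnion.mpr ⟨S, hSF, mem_edgesOf.mpr ⟨v, he, hvS⟩⟩, he⟩
  have hsuppcard : (G.supp C₀).card = ∑ S ∈ F, S.card := by
    rw [hsupp]
    exact Finset.card_biUnion (fun S hS T hT hne => comps_disjoint (hFsub hS) (hFsub hT) hne)
  have hdelta : G.delta C₀ = ∑ S ∈ F, (((G.edgesOf S).card : ℤ) - S.card) := by
    unfold delta
    rw [hcard, hsuppcard]
    push_cast
    rw [Finset.sum_sub_distrib]
  rw [hdelta, deltaG_eq hni, treeCount_eq hni]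
  rw [← Finset.sum_filter_add_sum_filter_not (G.comps Finset.univ)
    (fun S => (G.edgesOf S).card + 1 = S.card)
    (f := fun S => (((G.edgesOf S).card : ℤ) - S.card))]
  have htsum : ∑ S ∈ (G.comps Finset.univ).filter
        (fun S => (G.edgesOf S).card + 1 = S.card),
      (((G.edgesOf S).card : ℤ) - S.card)
      = -((((G.comps Finset.univ).filter
          (fun S => (G.edgesOf S).card + 1 = S.card)).card : ℤ)) := by
    have hterm : ∀ S ∈ (G.comps Finset.univ).filter
        (fun S => (G.edgesOf S).card + 1 = S.card),
        (((G.edgesOf S).card : ℤ) - S.card) = -1 := by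
      intro S hS
      have h := (Finset.mem_filter.mp hS).2
      have h' : ((G.edgesOf S).card : ℤ) + 1 = S.card := by exact_mod_cast h
      omega
    rw [Finset.sum_congr rfl hterm, Finset.sum_const, nsmul_eq_mul]
    ring
  rw [htsum]
  ring

lemma descent (k : ℕ) (hk : 1 ≤ k) :
    ∀ n (C : Finset G.E), C.card = n → C.Nonempty → (k : ℤ) ≤ G.delta C →
      ∃ D : Finset G.E, D.Nonempty ∧ G.delta D = (k : ℤ) := by
  intro n
  induction n with
  | zero =>
    intro C hcard hne _
    exact absurd (Finset.card_eq_zero.mp hcard) hne.ne_empty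
  | succ n ih =>
    intro C hcard hne hdel
    by_cases heq : G.delta C = (k : ℤ)
    · exact ⟨C, hne, heq⟩
    · obtain ⟨e, he⟩ := hne
      have hn1 : n ≠ 0 := by
        rintro rfl
        obtain ⟨a, rfl⟩ := Finset.card_eq_one.mp hcard
        have h0 := delta_singleton_le (G := G) a
        have hk' : (1 : ℤ) ≤ (k : ℤ) := by exact_mod_cast hk
        omega
      have hcard' : (C.erase e).card = n := by
        rw [Finset.card_erase_of_mem he, hcard]
        omega
      have hne' : (C.erase e).Nonempty := Finset.card_pos.mp (by omega)
      have hsupp' : (G.supp (C.erase e)).card ≤ (G.supp C).card :=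
        Finset.card_le_card (supp_mono (Finset.erase_subset _ _))
      have hdel' : (k : ℤ) ≤ G.delta (C.erase e) := by
        have hlt : (k : ℤ) + 1 ≤ G.delta C := by omega
        unfold delta at hlt ⊢
        rw [hcard', hcard] at *
        push_cast at *
        omega
      exact ih (C.erase e) hcard' hne' hdel'

lemma exists_delta_eq (hni : G.NoIso) (k : ℕ) (hk : 1 ≤ k)
    (hle : (k : ℤ) ≤ G.deltaG + G.treeCount Finset.univ) :
    ∃ C : Finset G.E, C.Nonempty ∧ G.delta C = (k : ℤ) := by
  set C₀ := ((G.comps Finset.univ).filter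
    (fun S => ¬ ((G.edgesOf S).card + 1 = S.card))).biUnion G.edgesOf with hC0
  have hd0 : G.delta C₀ = G.deltaG + G.treeCount Finset.univ := delta_C0 hni
  have hne : C₀.Nonempty := by
    rcases Finset.eq_empty_or_nonempty C₀ with h | h
    · exfalso
      rw [h, delta_empty] at hd0
      have hk' : (1 : ℤ) ≤ (k : ℤ) := by exact_mod_cast hk
      omega
    · exact h
  exact descent k hk C₀.card C₀ rfl hne (by rw [hd0]; exact hle)

lemma exists_circuit (k : ℕ) :
    ∀ n (C : Finset G.E), C.card = n → C.Nonempty → G.delta C = (k : ℤ) →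
      ∃ D, G.IsCircuitSet k D := by
  intro n
  induction n using Nat.strong_induction_on with
  | _ n ih =>
    intro C hcard hne hdel
    by_cases h : ∀ D ⊂ C, ¬ (D.Nonempty ∧ G.delta D = (k : ℤ))
    · exact ⟨C, ⟨hne, hdel⟩, h⟩
    · push_neg at h
      obtain ⟨D, hDC, hDne, hDdel⟩ := h
      exact ih D.card (hcard ▸ Finset.card_lt_card hDC) D rfl hDne hDdel

end Multigraph


/-- `M_k(G)` has a circuit iff `k ≤ Δ(G) + cmp(F(G))`, where `cmp(F(G))` is the
number of tree components of `G`. -/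
theorem stmt_18 (G : Multigraph) (k : ℕ) (hk : 1 ≤ k) (hni : G.NoIso) :
    (∃ C : Finset G.E, G.IsCircuitSet k C) ↔
      (k : ℤ) ≤ G.deltaG + G.treeCount Finset.univ := by
  constructor
  · rintro ⟨C, ⟨⟨hne, hdel⟩, -⟩⟩
    rw [← hdel]
    exact Multigraph.delta_le hni C
  · intro hle
    obtain ⟨C, hne, hdel⟩ := Multigraph.exists_delta_eq hni k hk hle
    exact Multigraph.exists_circuit k C.card C rfl hne hdel
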